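/- Let V_i: ℝⁿ → ℝ (i ∈ P, finite) be continuous functions such that a̲‖x‖ ≤ V_i(x) ≤ ā‖x‖ for all x, the upper right Dini derivative along solutions of ẋ = A_ix satisfies D⁺V_i(x, A_ix) ≤ -(α/ā)V_i(x), and V_i(x) ≤ μV_j(x) for all i ≠ j, where a̲, ā, α > 0, μ ≥ 1. Then along any solution x(·) of the switched system ẋ = A_σx with switching signal σ of average dwell-time τ_a > ā·ln(μ)/α and chatter bound N_0, we have ‖x(t)‖ ≤ (ā/a̲)·μ^{N_0}·e^{-λt}·‖x(0)‖ with λ = α/ā − ln(μ)/τ_a > 0; i.e., the origin is globally exponentially stable uniformly over Σ_{τ_a}. -/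

import Mathlib

open Matrix

/-- Upper right Dini derivative of `V` at `x` along the flow `h ↦ e^{hA} x` of `ẋ = Ax`. -/
noncomputable def diniAlong {n : ℕ} (V : EuclideanSpace ℝ (Fin n) → ℝ)
    (A : Matrix (Fin n) (Fin n) ℝ) (x : EuclideanSpace ℝ (Fin n)) : ℝ :=
  Filter.limsup
    (fun h : ℝ => (V (Matrix.toEuclideanLin (NormedSpace.exp (h • A)) x) - V x) / h)
    (nhdsWithin 0 (Set.Ioi 0))

section CpaAux

open NormedSpace Filter Set

noncomputable instance cpaRatAlg {n : ℕ} :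
    NormedAlgebra ℚ (EuclideanSpace ℝ (Fin n) →L[ℝ] EuclideanSpace ℝ (Fin n)) :=
  NormedAlgebra.restrictScalars ℚ ℝ _

lemma cpa_eps_le {a b : ℝ} (h : ∀ ε > 0, a ≤ b + ε) : a ≤ b := by
  by_contra hlt
  push_neg at hlt
  have := h ((a - b)/2) (by linarith)
  linarith

lemma cpa_toEuclideanCLM_continuous (n : ℕ) :
    Continuous (Matrix.toEuclideanCLM (𝕜 := ℝ) (n := Fin n)) := by
  let g : Matrix (Fin n) (Fin n) ℝ →ₗ[ℝ]
      (EuclideanSpace ℝ (Fin n) →L[ℝ] EuclideanSpace ℝ (Fin n)) :=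
    { toFun := Matrix.toEuclideanCLM (𝕜 := ℝ),
      map_add' := fun a b => map_add _ a b,
      map_smul' := fun r a => map_smul _ r a }
  exact g.continuous_of_finiteDimensional

lemma cpa_toEuclideanLin_eq_CLM {n : ℕ} (M : Matrix (Fin n) (Fin n) ℝ)
    (v : EuclideanSpace ℝ (Fin n)) :
    Matrix.toEuclideanLin M v = Matrix.toEuclideanCLM (𝕜 := ℝ) M v := rfl

lemma cpa_exp_bridge {n : ℕ} (M : Matrix (Fin n) (Fin n) ℝ) (v : EuclideanSpace ℝ (Fin n)) :
    Matrix.toEuclideanLin (NormedSpace.exp M) v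
      = NormedSpace.exp (Matrix.toEuclideanCLM (𝕜 := ℝ) M) v := by
  letI : SeminormedRing (Matrix (Fin n) (Fin n) ℝ) := Matrix.linftyOpSemiNormedRing
  letI : NormedRing (Matrix (Fin n) (Fin n) ℝ) := Matrix.linftyOpNormedRing
  letI : NormedAlgebra ℝ (Matrix (Fin n) (Fin n) ℝ) := Matrix.linftyOpNormedAlgebra
  letI : CompleteSpace (Matrix (Fin n) (Fin n) ℝ) := FiniteDimensional.complete ℝ _
  letI : NormedAlgebra ℚ (Matrix (Fin n) (Fin n) ℝ) := Matrix.linftyOpNormedAlgebra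
  rw [cpa_toEuclideanLin_eq_CLM]
  exact congrArg (fun F => F v) (NormedSpace.map_exp (Matrix.toEuclideanCLM (𝕜 := ℝ) (n := Fin n))
      (cpa_toEuclideanCLM_continuous n) M)

variable {n : ℕ}

local notation "E" => EuclideanSpace ℝ (Fin n)

lemma cpa_exp_smul_combine (L : E →L[ℝ] E) (p q : ℝ) (w : E) :
    NormedSpace.exp (p • L) (NormedSpace.exp (q • L) w)
      = NormedSpace.exp ((p + q) • L) w := by
  have hcomm : Commute (p • L) (q • L) := by
    show _ = _
    ext u
    simp [ContinuousLinearMap.mul_apply, _root_.map_smul]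
    ring
  rw [show (p + q) • L = p • L + q • L from add_smul p q L,
    NormedSpace.exp_add_of_commute hcomm, ContinuousLinearMap.mul_apply]

lemma cpa_exp_zero_smul (L : E →L[ℝ] E) (w : E) :
    NormedSpace.exp ((0:ℝ) • L) w = w := by
  rw [show (0:ℝ) • L = 0 from zero_smul ℝ L, NormedSpace.exp_zero,
    ContinuousLinearMap.one_apply]

lemma cpa_flow_cont (L : E →L[ℝ] E) (w : E) :
    Continuous fun s : ℝ => NormedSpace.exp (s • L) w :=
  (NormedSpace.exp_continuous.comp (continuous_id.smul continuous_const)).clm_apply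
    continuous_const

lemma cpa_flow_hasDerivAt (L : E →L[ℝ] E) (w : E) (s : ℝ) :
    HasDerivAt (fun τ : ℝ => NormedSpace.exp (τ • L) w)
      (L (NormedSpace.exp (s • L) w)) s := by
  have h1 : HasDerivAt (fun τ : ℝ => NormedSpace.exp (τ • L))
      (L * NormedSpace.exp (s • L)) s := hasDerivAt_exp_smul_const' L s
  have h2 := h1.clm_apply (hasDerivAt_const s w)
  simpa using h2

lemma cpa_flow_decay (Vf : E → ℝ) (L : E →L[ℝ] E) {c alow : ℝ}
    (hc : 0 < c) (halow : 0 < alow)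
    (hV : Continuous Vf) (hlow : ∀ v, alow * ‖v‖ ≤ Vf v) (hV0 : Vf 0 = 0)
    (hd : ∀ v, Filter.limsup (fun h : ℝ => (Vf (NormedSpace.exp (h • L) v) - Vf v) / h)
        (nhdsWithin 0 (Set.Ioi 0)) ≤ -c * Vf v)
    (v : E) {t : ℝ} (ht : 0 ≤ t) :
    Vf (NormedSpace.exp (t • L) v) ≤ Real.exp (-c * t) * Vf v := by
  have hVpos : ∀ w : E, 0 ≤ Vf w := fun w => le_trans (by positivity) (hlow w)
  -- boundedness of the slope function
  have hbdd : ∀ w : E, IsBoundedUnder (· ≤ ·) (nhdsWithin (0:ℝ) (Set.Ioi 0))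
      (fun h : ℝ => (Vf (NormedSpace.exp (h • L) w) - Vf w) / h) := by
    intro w
    by_contra hnb
    have hset : {a : ℝ | ∀ᶠ z in nhdsWithin (0:ℝ) (Set.Ioi 0),
        (Vf (NormedSpace.exp (z • L) w) - Vf w) / z ≤ a} = ∅ := by
      rw [Set.eq_empty_iff_forall_notMem]
      intro a ha
      exact hnb ⟨a, by simpa [Filter.eventually_map] using ha⟩
    have hls : Filter.limsup (fun h : ℝ => (Vf (NormedSpace.exp (h • L) w) - Vf w) / h)
        (nhdsWithin (0:ℝ) (Set.Ioi 0)) = 0 := by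
      rw [Filter.limsup_eq, hset, Real.sInf_empty]
    have h0 := hd w
    rw [hls] at h0
    have hVw : Vf w = 0 := le_antisymm (by nlinarith [hVpos w]) (hVpos w)
    have hw : w = 0 := by
      have := hlow w
      rw [hVw] at this
      have : ‖w‖ = 0 := le_antisymm (by nlinarith) (norm_nonneg w)
      simpa using this
    apply hnb
    refine ⟨0, ?_⟩
    simp only [Filter.eventually_map]
    filter_upwards with z
    simp [hw, hV0]
  set g : ℝ → ℝ := fun s => Vf (NormedSpace.exp (s • L) v) with hg
  have hgcont : Continuous g := hV.comp (cpa_flow_cont L v)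
  have hg0 : g 0 = Vf v := by
    show Vf _ = Vf v
    rw [show (0:ℝ) • L = 0 from zero_smul ℝ L, NormedSpace.exp_zero,
      ContinuousLinearMap.one_apply]
  apply cpa_eps_le
  intro ε hε
  have key := image_le_of_liminf_slope_right_lt_deriv_boundary'
    (f := g) (f' := fun s => -c * g s) (a := 0) (b := t)
    (B := fun s => Real.exp (-c * s) * Vf v + ε)
    (B' := fun s => -c * (Real.exp (-c * s) * Vf v))
    hgcont.continuousOn
    ?_ (by simp [hg0]; linarith) (by fun_prop) ?_ ?_
  · exact key ⟨ht, le_rfl⟩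
  · -- slope condition
    intro s hs r hr
    set w := NormedSpace.exp (s • L) v with hw
    have hsl : ∀ z : ℝ, slope g s z
        = (Vf (NormedSpace.exp ((z - s) • L) w) - Vf w) / (z - s) := by
      intro z
      rw [slope_def_field]
      have : NormedSpace.exp (z • L) v = NormedSpace.exp ((z - s) • L) w := by
        rw [hw, cpa_exp_smul_combine, sub_add_cancel]
      simp only [hg, this]
      rfl
    have hlim := hd w
    have hlt : Filter.limsup
        (fun h : ℝ => (Vf (NormedSpace.exp (h • L) w) - Vf w) / h)
        (nhdsWithin (0:ℝ) (Set.Ioi 0)) < r := lt_of_le_of_lt hlim hr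
    have hev : ∀ᶠ h : ℝ in nhdsWithin (0:ℝ) (Set.Ioi 0),
        (Vf (NormedSpace.exp (h • L) w) - Vf w) / h < r :=
      Filter.eventually_lt_of_limsup_lt hlt (hbdd w)
    have htend : Filter.Tendsto (fun z : ℝ => z - s)
        (nhdsWithin s (Set.Ioi s)) (nhdsWithin (0:ℝ) (Set.Ioi 0)) := by
      apply tendsto_nhdsWithin_of_tendsto_nhds_of_eventually_within
      · have := (continuous_id.sub (continuous_const (y := s))).tendsto s
        have h' : Tendsto (fun z : ℝ => z - s) (nhdsWithin s (Ioi s)) (nhds (s - s)) :=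
          this.mono_left nhdsWithin_le_nhds
        simpa using h'
      · filter_upwards [self_mem_nhdsWithin] with z hz
        exact sub_pos.2 (Set.mem_Ioi.1 hz)
    have := htend.eventually hev
    refine (this.mono fun z hz => ?_).frequently
    rw [hsl z]; exact hz
  · -- derivative of B
    intro s hs
    have h1 : HasDerivAt (fun s : ℝ => Real.exp (-c * s) * Vf v + ε)
        (-c * (Real.exp (-c * s) * Vf v)) s := by
      have h2 : HasDerivAt (fun s : ℝ => -c * s) (-c) s := by
        simpa using (hasDerivAt_id s).const_mul (-c)
      have h3 := (Real.hasDerivAt_exp (-c * s)).comp s h2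
      have h4 := (h3.mul_const (Vf v)).add_const ε
      exact h4.congr_deriv (by ring)
    exact h1.hasDerivWithinAt
  · -- strictness at contact points
    intro s hs heq
    rw [heq]
    have : 0 < c * ε := by positivity
    linarith

lemma cpa_sol_eq_flow (L : E →L[ℝ] E) (x : ℝ → E) {a b : ℝ}
    (hx : Continuous x)
    (hode : ∀ u ∈ Set.Ioo a b, HasDerivAt x (L (x u)) u) :
    ∀ u ∈ Set.Icc a b, x u = NormedSpace.exp ((u - a) • L) (x a) := by
  intro u hu
  rcases eq_or_lt_of_le hu.1 with rfl | hau
  · rw [sub_self, cpa_exp_zero_smul]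
  -- for every a' in (a, u), x u equals the flow from x a'
  have claim : ∀ a' ∈ Set.Ioo a u, NormedSpace.exp ((u - a') • L) (x a') = x u := by
    intro a' ha'
    set w' : E := NormedSpace.exp ((-a') • L) (x a') with hw'
    have key : Set.EqOn x (fun s => NormedSpace.exp (s • L) w') (Set.Icc a' u) := by
      apply ODE_solution_unique (v := fun _ z => L z) (K := ‖L‖₊)
        (fun _ => L.lipschitz)
      · exact hx.continuousOn
      · intro s hs
        exact (hode s ⟨lt_of_lt_of_le ha'.1 hs.1, lt_of_lt_of_le hs.2 hu.2⟩).hasDerivWithinAt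
      · exact ((cpa_flow_cont L w').continuousOn)
      · intro s hs
        exact (cpa_flow_hasDerivAt L w' s).hasDerivWithinAt
      · show x a' = NormedSpace.exp (a' • L) w'
        rw [hw', cpa_exp_smul_combine, add_neg_cancel, cpa_exp_zero_smul]
    have hxu := key ⟨le_of_lt (lt_of_lt_of_le ha'.2 le_rfl), le_rfl⟩
    rw [hxu]
    show NormedSpace.exp ((u - a') • L) (x a') = NormedSpace.exp (u • L) w'
    rw [hw', cpa_exp_smul_combine, ← sub_eq_add_neg]
  -- take the limit a' → a⁺
  have hne : (nhdsWithin a (Set.Ioo a u)).NeBot := by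
    rw [← mem_closure_iff_nhdsWithin_neBot, closure_Ioo (ne_of_lt hau)]
    exact ⟨le_rfl, le_of_lt hau⟩
  have hGcont : Continuous fun a' : ℝ => NormedSpace.exp ((u - a') • L) (x a') :=
    (NormedSpace.exp_continuous.comp
      ((continuous_const.sub continuous_id).smul continuous_const)).clm_apply hx
  have h1 : Filter.Tendsto (fun a' : ℝ => NormedSpace.exp ((u - a') • L) (x a'))
      (nhdsWithin a (Set.Ioo a u)) (nhds (NormedSpace.exp ((u - a) • L) (x a))) :=
    (hGcont.tendsto a).mono_left nhdsWithin_le_nhds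
  have h2 : Filter.Tendsto (fun a' : ℝ => NormedSpace.exp ((u - a') • L) (x a'))
      (nhdsWithin a (Set.Ioo a u)) (nhds (x u)) := by
    apply Filter.Tendsto.congr' _ tendsto_const_nhds
    filter_upwards [self_mem_nhdsWithin] with a' ha'
    exact (claim a' ha').symm
  exact (tendsto_nhds_unique h1 h2).symm

end CpaAux

/-- Continuous multiple Lyapunov functions with linear sandwich bounds,
Dini decrease `D⁺V_i(x, A_i x) ≤ -(α/ā) V_i(x)` and compatibility `V_i ≤ μ V_j` imply
global exponential stability, uniformly over switching signals with average dwell-time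
`τa > ā ln μ / α`:  `‖x(t)‖ ≤ (ā/a̲) μ^{N0} e^{-λ t} ‖x(0)‖` with `λ = α/ā − ln μ/τa > 0`. -/
theorem cpa_dwell_time_exponential_stability {n : ℕ} {ι : Type*} [Fintype ι] [Nonempty ι]
    (A : ι → Matrix (Fin n) (Fin n) ℝ)
    (V : ι → EuclideanSpace ℝ (Fin n) → ℝ)
    (alow abar α μ τa N0 : ℝ)
    (h1 : 0 < alow) (h2 : 0 < abar) (h3 : 0 < α) (hμ : 1 ≤ μ) (hN0 : 0 < N0)
    (hτa : τa > abar * Real.log μ / α)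
    (hVcont : ∀ i, Continuous (V i))
    (hsandwich : ∀ i x, alow * ‖x‖ ≤ V i x ∧ V i x ≤ abar * ‖x‖)
    (hdini : ∀ i x, diniAlong (V i) (A i) x ≤ -(α / abar) * V i x)
    (hcompat : ∀ i j, i ≠ j → ∀ x, V i x ≤ μ * V j x)
    -- a solution of the switched system with switching signal σ and switching times tk
    (σ : ℝ → ι) (tk : ℕ → ℝ) (x : ℝ → EuclideanSpace ℝ (Fin n))
    (htk : StrictMono tk) (htk0 : 0 < tk 0)
    (hσ : ∀ k : ℕ, ∀ u, tk k ≤ u → u < tk (k + 1) → σ u = σ (tk k))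
    (hσ0 : ∀ u, 0 ≤ u → u < tk 0 → σ u = σ 0)
    (hxcont : Continuous x)
    (hxode : ∀ t, 0 ≤ t → t ∉ Set.range tk →
      HasDerivAt x (Matrix.toEuclideanLin (A (σ t)) (x t)) t)
    -- average dwell-time property with chatter bound N0
    (hADT : ∀ s t : ℝ, 0 ≤ s → s ≤ t →
      (({k : ℕ | tk k ∈ Set.Ioo s t}.ncard : ℝ) ≤ N0 + (t - s) / τa)) :
    0 < α / abar - Real.log μ / τa ∧
    ∀ t, 0 ≤ t →
      ‖x t‖ ≤ (abar / alow) * μ ^ (N0 : ℝ) *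
        Real.exp (-(α / abar - Real.log μ / τa) * t) * ‖x 0‖ := by
  classical
  set c := α / abar with hc_def
  have hc : 0 < c := div_pos h3 h2
  have hlogμ : 0 ≤ Real.log μ := Real.log_nonneg hμ
  have hτpos : 0 < τa := lt_of_le_of_lt (div_nonneg (mul_nonneg h2.le hlogμ) h3.le) hτa
  have hμ0 : (0:ℝ) < μ := lt_of_lt_of_le zero_lt_one hμ
  have hlam : 0 < c - Real.log μ / τa := by
    rw [sub_pos, hc_def, div_lt_div_iff₀ hτpos h2]
    have := (div_lt_iff₀ h3).mp hτa
    nlinarith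
  refine ⟨hlam, ?_⟩
  set lam := c - Real.log μ / τa with hlam_def
  set L : ι → (EuclideanSpace ℝ (Fin n) →L[ℝ] EuclideanSpace ℝ (Fin n)) :=
    fun i => Matrix.toEuclideanCLM (𝕜 := ℝ) (A i) with hLdef
  have hV0 : ∀ i, V i 0 = 0 := fun i =>
    le_antisymm (by simpa using (hsandwich i 0).2) (by simpa using (hsandwich i 0).1)
  have hVpos : ∀ i w, 0 ≤ V i w := fun i w => le_trans (by positivity) (hsandwich i w).1
  have hdini' : ∀ i v, Filter.limsup
      (fun h : ℝ => (V i (NormedSpace.exp (h • L i) v) - V i v) / h)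
      (nhdsWithin 0 (Set.Ioi 0)) ≤ -c * V i v := by
    intro i v
    have hrw : (fun h : ℝ => (V i (NormedSpace.exp (h • L i) v) - V i v) / h)
        = fun h : ℝ =>
          (V i (Matrix.toEuclideanLin (NormedSpace.exp (h • A i)) v) - V i v) / h := by
      funext h
      rw [cpa_exp_bridge, _root_.map_smul (Matrix.toEuclideanCLM (𝕜 := ℝ)) h (A i)]
    rw [hrw]
    exact hdini i v
  have hstep : ∀ i (a b : ℝ), a ≤ b →
      (∀ u ∈ Set.Ioo a b, HasDerivAt x ((L i) (x u)) u) →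
      V i (x b) ≤ Real.exp (-c * (b - a)) * V i (x a) := by
    intro i a b hab hode
    have hflow := cpa_sol_eq_flow (L i) x hxcont hode b ⟨hab, le_rfl⟩
    rw [hflow]
    exact cpa_flow_decay (V i) (L i) hc h1 (hVcont i)
      (fun v => (hsandwich i v).1) (hV0 i) (hdini' i) (x a) (sub_nonneg.2 hab)
  have htkpos : ∀ k, 0 < tk k := fun k => lt_of_lt_of_le htk0 (htk.monotone (Nat.zero_le k))
  have hnotin : ∀ k u, tk k < u → u < tk (k+1) → u ∉ Set.range tk := by
    rintro k u h1u h2u ⟨j, rfl⟩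
    rcases le_or_gt j k with hj | hj
    · exact absurd (htk.monotone hj) (not_le.2 h1u)
    · exact absurd (htk.monotone hj) (not_le.2 h2u)
  have hodeI : ∀ k, ∀ u ∈ Set.Ioo (tk k) (tk (k+1)),
      HasDerivAt x ((L (σ (tk k))) (x u)) u := by
    intro k u hu
    have h0u : (0:ℝ) ≤ u := le_of_lt (lt_trans (htkpos k) hu.1)
    have hd := hxode u h0u (hnotin k u hu.1 hu.2)
    rw [hσ k u (le_of_lt hu.1) hu.2] at hd
    exact hd
  have hode0 : ∀ u ∈ Set.Ioo (0:ℝ) (tk 0), HasDerivAt x ((L (σ 0)) (x u)) u := by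
    intro u hu
    have hnr : u ∉ Set.range tk := by
      rintro ⟨j, rfl⟩
      exact absurd (htk.monotone (Nat.zero_le j)) (not_le.2 hu.2)
    have hd := hxode u (le_of_lt hu.1) hnr
    rw [hσ0 u (le_of_lt hu.1) hu.2] at hd
    exact hd
  -- the switching times are unbounded
  have htkub : ∀ T : ℝ, ∃ K, T < tk K := by
    intro T
    by_contra hb
    push_neg at hb
    obtain ⟨M, hM⟩ := exists_nat_gt (N0 + (T - tk 0)/τa)
    have hscard : {k : ℕ | tk k ∈ Set.Ioo (tk 0) (tk (M+1))} = Set.Ioo 0 (M+1) := by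
      ext k
      simp [Set.mem_Ioo, htk.lt_iff_lt]
    have hA1 := hADT (tk 0) (tk (M+1)) htk0.le (htk.monotone (Nat.zero_le _))
    rw [hscard] at hA1
    have hcard : (Set.Ioo (0:ℕ) (M+1)).ncard = M := by
      rw [← Finset.coe_Ioo, Set.ncard_coe_finset, Nat.card_Ioo]
      omega
    rw [hcard] at hA1
    have h2' : (tk (M+1) - tk 0)/τa ≤ (T - tk 0)/τa := by
      gcongr
      exact hb (M+1)
    linarith
  -- counting bound from ADT
  have hcount : ∀ (m : ℕ) (t : ℝ), tk m ≤ t → (m + 1 : ℝ) ≤ N0 + t / τa := by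
    intro m t hmt
    apply cpa_eps_le
    intro ε hε
    obtain ⟨K, hK⟩ := htkub (t + ε * τa)
    have hsub : Set.Iic m ⊆ {k : ℕ | tk k ∈ Set.Ioo 0 (t + ε * τa)} := by
      intro k hk
      refine ⟨htkpos k, ?_⟩
      have : tk k ≤ t := le_trans (htk.monotone hk) hmt
      nlinarith
    have hfin : {k : ℕ | tk k ∈ Set.Ioo 0 (t + ε * τa)}.Finite := by
      apply Set.Finite.subset (Set.finite_Iio K)
      intro k hk
      simp only [Set.mem_Iio]
      by_contra hkK
      push_neg at hkK
      have h4 := htk.monotone hkK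
      have h5 : tk k < t + ε * τa := hk.2
      linarith
    have hc1 := Set.ncard_le_ncard hsub hfin
    have hc2 : (Set.Iic m).ncard = m + 1 := by
      rw [← Finset.coe_Iic, Set.ncard_coe_finset, Nat.card_Iic]
    have h3' := hADT 0 (t + ε*τa) le_rfl (by nlinarith [le_trans (htkpos m).le hmt])
    have h6 : ((m+1 : ℕ) : ℝ) ≤ ({k : ℕ | tk k ∈ Set.Ioo 0 (t + ε * τa)}.ncard : ℝ) := by
      exact_mod_cast hc2 ▸ hc1
    have hdiv : (t + ε*τa - 0)/τa = t/τa + ε := by field_simp; ring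
    push_cast at h6
    linarith [h3', hdiv ▸ h3']
  -- the Lyapunov induction along switching times
  have hW : ∀ m : ℕ, V (σ (tk m)) (x (tk m))
      ≤ μ ^ (m + 1) * (Real.exp (-c * tk m) * V (σ 0) (x 0)) := by
    intro m
    induction m with
    | zero =>
      have hs := hstep (σ 0) 0 (tk 0) htk0.le hode0
      have hμstep : V (σ (tk 0)) (x (tk 0)) ≤ μ * V (σ 0) (x (tk 0)) := by
        by_cases h : σ (tk 0) = σ 0
        · rw [h]; exact le_mul_of_one_le_left (hVpos _ _) hμ
        · exact hcompat _ _ h _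
      calc V (σ (tk 0)) (x (tk 0)) ≤ μ * V (σ 0) (x (tk 0)) := hμstep
        _ ≤ μ * (Real.exp (-c * (tk 0 - 0)) * V (σ 0) (x 0)) :=
            mul_le_mul_of_nonneg_left hs (le_trans zero_le_one hμ)
        _ = μ ^ (0 + 1) * (Real.exp (-c * tk 0) * V (σ 0) (x 0)) := by
            rw [pow_one, sub_zero]
    | succ m ih =>
      have hs := hstep (σ (tk m)) (tk m) (tk (m+1)) (htk.monotone (Nat.le_succ m)) (hodeI m)
      have hμstep : V (σ (tk (m+1))) (x (tk (m+1)))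
          ≤ μ * V (σ (tk m)) (x (tk (m+1))) := by
        by_cases h : σ (tk (m+1)) = σ (tk m)
        · rw [h]; exact le_mul_of_one_le_left (hVpos _ _) hμ
        · exact hcompat _ _ h _
      have e1 : Real.exp (-c * (tk (m+1) - tk m)) * Real.exp (-c * tk m)
          = Real.exp (-c * tk (m+1)) := by
        rw [← Real.exp_add]; congr 1; ring
      calc V (σ (tk (m+1))) (x (tk (m+1)))
          ≤ μ * V (σ (tk m)) (x (tk (m+1))) := hμstep
        _ ≤ μ * (Real.exp (-c * (tk (m+1) - tk m)) * V (σ (tk m)) (x (tk m))) :=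
            mul_le_mul_of_nonneg_left hs (le_trans zero_le_one hμ)
        _ ≤ μ * (Real.exp (-c * (tk (m+1) - tk m)) *
              (μ ^ (m+1) * (Real.exp (-c * tk m) * V (σ 0) (x 0)))) := by
            have := mul_le_mul_of_nonneg_left ih (Real.exp_pos (-c * (tk (m+1) - tk m))).le
            exact mul_le_mul_of_nonneg_left this (le_trans zero_le_one hμ)
        _ = μ ^ (m + 1 + 1) * (Real.exp (-c * tk (m+1)) * V (σ 0) (x 0)) := by
            rw [← e1]; ring
  intro t ht
  have hexp_nonneg : ∀ y : ℝ, (0:ℝ) ≤ Real.exp y := fun y => (Real.exp_pos y).le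
  have hrpow1 : (1:ℝ) ≤ μ ^ (N0:ℝ) := Real.one_le_rpow hμ hN0.le
  have hrpow0 : (0:ℝ) ≤ μ ^ (N0:ℝ) := le_trans zero_le_one hrpow1
  have hkey : V (σ t) (x t) ≤ μ ^ (N0:ℝ) * (Real.exp (-lam * t) * V (σ 0) (x 0)) := by
    have hcf : Real.exp (-c * t) ≤ Real.exp (-lam * t) := by
      apply Real.exp_le_exp.2
      have : 0 ≤ Real.log μ / τa := div_nonneg hlogμ hτpos.le
      have hlamc : lam ≤ c := by rw [hlam_def]; linarith
      nlinarith
    by_cases hcase : t < tk 0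
    · rw [hσ0 t ht hcase]
      have hs := hstep (σ 0) 0 t ht (fun u hu => hode0 u ⟨hu.1, lt_trans hu.2 hcase⟩)
      rw [sub_zero] at hs
      calc V (σ 0) (x t) ≤ Real.exp (-c * t) * V (σ 0) (x 0) := hs
        _ ≤ Real.exp (-lam * t) * V (σ 0) (x 0) :=
            mul_le_mul_of_nonneg_right hcf (hVpos _ _)
        _ ≤ μ ^ (N0:ℝ) * (Real.exp (-lam * t) * V (σ 0) (x 0)) :=
            le_mul_of_one_le_left (mul_nonneg (hexp_nonneg _) (hVpos _ _)) hrpow1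
    · push_neg at hcase
      have hex : ∃ k, t < tk k := htkub t
      set k0 := Nat.find hex with hk0
      have hk0pos : k0 ≠ 0 := by
        intro h0
        have := Nat.find_spec hex
        rw [← hk0, h0] at this
        exact absurd this (not_lt.2 hcase)
      obtain ⟨m, hm⟩ : ∃ m, k0 = m + 1 :=
        ⟨k0 - 1, (Nat.succ_pred_eq_of_pos (Nat.pos_of_ne_zero hk0pos)).symm⟩
      have hmt : tk m ≤ t := by
        by_contra hmt'
        push_neg at hmt'
        exact (Nat.find_min hex (by omega)) hmt'
      have htm1 : t < tk (m+1) := by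
        have := Nat.find_spec hex
        rw [← hk0, hm] at this
        exact this
      rw [hσ m t hmt htm1]
      have hs := hstep (σ (tk m)) (tk m) t hmt
        (fun u hu => hodeI m u ⟨hu.1, lt_trans hu.2 htm1⟩)
      have hWm := hW m
      have hcnt := hcount m t hmt
      have hpow : (μ:ℝ) ^ (m+1) ≤ μ ^ (N0 + t/τa) := by
        rw [← Real.rpow_natCast μ (m+1)]
        apply Real.rpow_le_rpow_of_exponent_le hμ
        push_cast
        exact hcnt
      have hsplit : μ ^ (N0 + t/τa) = μ ^ (N0:ℝ) * Real.exp (t/τa * Real.log μ) := by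
        rw [Real.rpow_add hμ0]
        congr 1
        rw [Real.rpow_def_of_pos hμ0, mul_comm]
      have eexp : Real.exp (-c * (t - tk m)) * Real.exp (-c * tk m)
          = Real.exp (-c * t) := by
        rw [← Real.exp_add]; congr 1; ring
      have elam : Real.exp (t/τa * Real.log μ) * Real.exp (-c * t)
          = Real.exp (-lam * t) := by
        rw [← Real.exp_add]; congr 1
        rw [hlam_def]
        field_simp
        ring
      calc V (σ (tk m)) (x t)
          ≤ Real.exp (-c * (t - tk m)) * V (σ (tk m)) (x (tk m)) := hs
        _ ≤ Real.exp (-c * (t - tk m)) *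
              (μ ^ (m+1) * (Real.exp (-c * tk m) * V (σ 0) (x 0))) :=
            mul_le_mul_of_nonneg_left hWm (hexp_nonneg _)
        _ = μ ^ (m+1) * (Real.exp (-c * t) * V (σ 0) (x 0)) := by
            rw [← eexp]; ring
        _ ≤ μ ^ (N0 + t/τa) * (Real.exp (-c * t) * V (σ 0) (x 0)) :=
            mul_le_mul_of_nonneg_right hpow
              (mul_nonneg (hexp_nonneg _) (hVpos _ _))
        _ = μ ^ (N0:ℝ) * (Real.exp (-lam * t) * V (σ 0) (x 0)) := by
            rw [hsplit, ← elam]; ring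
  -- conclude with the sandwich bounds
  have hlow := (hsandwich (σ t) (x t)).1
  have hup := (hsandwich (σ 0) (x 0)).2
  have hchain : alow * ‖x t‖ ≤ μ ^ (N0:ℝ) * (Real.exp (-lam * t) * (abar * ‖x 0‖)) := by
    refine le_trans hlow (le_trans hkey ?_)
    exact mul_le_mul_of_nonneg_left
      (mul_le_mul_of_nonneg_left hup (hexp_nonneg _)) hrpow0
  have heq : (abar/alow) * μ ^ (N0:ℝ) * Real.exp (-lam * t) * ‖x 0‖
      = (μ ^ (N0:ℝ) * (Real.exp (-lam * t) * (abar * ‖x 0‖))) / alow := by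
    field_simp
  rw [show -(α / abar - Real.log μ / τa) = -lam from rfl]
  rw [heq, le_div_iff₀ h1]
  linarith [hchain]
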